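/- Let A be a unital C*-algebra, F a finite-dimensional C*-algebra, ψ : A → F a completely positive contractive map, and q ∈ F a projection with ‖ψ(1_A) − q‖ < δ < 1/4. Then the element qψ(1_A)q is invertible in qFq, and the map ψ' : A → qFq defined by ψ'(a) := (qψ(1_A)q)^{−1/2} · qψ(a)q · (qψ(1_A)q)^{−1/2} is unital completely positive and satisfies ‖ψ'(a) − ψ(a)‖ ≤ C(δ)·‖a‖ for all a ∈ A, where C(δ) → 0 as δ → 0. -/

import Mathlib

open Filter Topology

lemma contOn_aux {h : ℝ → ℝ} (hh : ∀ t : ℝ, (1:ℝ)/2 < t → ContinuousAt h t)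
    {c d : ℝ} (hc : (3:ℝ)/4 ≤ c) :
    ContinuousOn (fun t => if t = 0 then 0 else h t) ({0} ∪ Set.Icc c d) := by
  intro t ht
  rcases eq_or_ne t 0 with rfl | hne
  · have hmem : Set.Ioo (-(1:ℝ)/2) (1/2) ∈ 𝓝 (0:ℝ) :=
      Ioo_mem_nhds (by norm_num) (by norm_num)
    have hev : ∀ᶠ x in 𝓝[({0} ∪ Set.Icc c d)] (0:ℝ),
        (if x = 0 then (0:ℝ) else h x) = 0 := by
      filter_upwards [mem_nhdsWithin_of_mem_nhds hmem, self_mem_nhdsWithin] with x hx hxS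
      rcases hxS with rfl | hxI
      · simp
      · exact absurd (lt_of_lt_of_le hx.2 (le_trans (by norm_num) (hc.trans hxI.1))).false
          (by simp)
    have : Filter.Tendsto (fun x => if x = 0 then (0:ℝ) else h x)
        (𝓝[({0} ∪ Set.Icc c d)] (0:ℝ)) (𝓝 0) :=
      tendsto_const_nhds.congr' (hev.mono fun x hx => hx.symm)
    simpa [ContinuousWithinAt] using this
  · have htc : t ∈ Set.Icc c d := ht.resolve_left hne
    have hcont : ContinuousWithinAt h ({0} ∪ Set.Icc c d) t :=
      (hh t (lt_of_lt_of_le (by norm_num) (hc.trans htc.1))).continuousWithinAt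
    apply hcont.congr_of_eventuallyEq
    · filter_upwards [mem_nhdsWithin_of_mem_nhds (isOpen_compl_singleton.mem_nhds hne)]
        with x hx
      simp only [Set.mem_compl_iff, Set.mem_singleton_iff] at hx
      simp [hx]
    · simp [hne]

lemma proj_norm_le_one {F : Type*} [CStarAlgebra F] {p : F}
    (hp : IsIdempotentElem p) (hpa : IsSelfAdjoint p) : ‖p‖ ≤ 1 := by
  have h : ‖p‖ * ‖p‖ = ‖p‖ := by
    conv_rhs => rw [← hp.eq]
    rw [← CStarRing.norm_star_mul_self, hpa.star_eq]
  nlinarith [norm_nonneg p]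

lemma aux_unit {F : Type*} [Ring F] {q u v c d : F}
    (hq : q * q = q) (hvu : v * u = 1) (hdc : d * c = 1)
    (hqu : q * u = u * q)
    (hc : ∀ x : F, c * x = x * c) :
    (v * q + d * (1 - q)) * (u * q + c * (1 - q)) = 1 := by
  have h1 : q * (1 - q) = 0 := by rw [mul_sub, mul_one, hq, sub_self]
  have h3 : (1 - q) * q = 0 := by rw [sub_mul, one_mul, hq, sub_self]
  have hqu' : (1 - q) * u = u * (1 - q) := by
    rw [sub_mul, mul_sub, one_mul, mul_one, hqu]
  have hA : v * q * (u * q) = q := by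
    rw [show v * q * (u * q) = v * (q * u) * q by noncomm_ring, hqu,
      show v * (u * q) * q = (v * u) * (q * q) by noncomm_ring, hvu, hq, one_mul]
  have hB : v * q * (c * (1 - q)) = 0 := by
    rw [hc (1 - q), show v * q * ((1 - q) * c) = v * (q * (1 - q)) * c by noncomm_ring,
      h1, mul_zero, zero_mul]
  have hC : d * (1 - q) * (u * q) = 0 := by
    rw [show d * (1 - q) * (u * q) = d * ((1 - q) * u) * q by noncomm_ring, hqu',
      show d * (u * (1 - q)) * q = d * u * ((1 - q) * q) by noncomm_ring, h3, mul_zero]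
  have hD : d * (1 - q) * (c * (1 - q)) = 1 - q := by
    rw [hc (1 - q), show d * (1 - q) * ((1 - q) * c) = d * ((1 - q) * ((1 - q) * c)) by
        noncomm_ring,
      show (1 - q) * ((1 - q) * c) = ((1 - q) * (1 - q)) * c by noncomm_ring,
      show (1 - q) * (1 - q) = 1 - q by
        rw [sub_mul, mul_sub, mul_sub, one_mul, mul_one, hq]; noncomm_ring,
      show d * ((1 - q) * c) = d * (c * (1 - q)) by rw [hc (1 - q)],
      show d * (c * (1 - q)) = (d * c) * (1 - q) by noncomm_ring, hdc, one_mul]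
  calc (v * q + d * (1 - q)) * (u * q + c * (1 - q))
      = v * q * (u * q) + v * q * (c * (1 - q)) + d * (1 - q) * (u * q)
          + d * (1 - q) * (c * (1 - q)) := by noncomm_ring
    _ = 1 := by rw [hA, hB, hC, hD]; noncomm_ring

lemma real_smul_nonneg {F : Type*} [CStarAlgebra F] [PartialOrder F] [StarOrderedRing F]
    {c : ℝ} (hc : 0 ≤ c) {x : F} (hx : 0 ≤ x) : 0 ≤ c • x := by
  rw [StarOrderedRing.nonneg_iff] at hx
  induction hx using AddSubmonoid.closure_induction with
  | mem z hz =>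
    obtain ⟨s, rfl⟩ := hz
    have h : c • (star s * s) = star (Real.sqrt c • s) * (Real.sqrt c • s) := by
      rw [star_smul, smul_mul_smul_comm, star_trivial (Real.sqrt c), Real.mul_self_sqrt hc]
    rw [h]
    exact star_mul_self_nonneg _
  | zero => simp
  | add x y _ _ hx hy => rw [smul_add]; exact add_nonneg hx hy

/-- Complete positivity for maps between star algebras. -/
def IsCompletelyPositive {B A : Type*}
    [NonUnitalRing B] [StarRing B] [Module ℂ B]
    [NonUnitalRing A] [StarRing A] [PartialOrder A] [Module ℂ A] (φ : B → A) : Prop :=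
  (∀ x y, φ (x + y) = φ x + φ y) ∧ (∀ (c : ℂ) (x : B), φ (c • x) = c • φ x) ∧
    ∀ (k : ℕ) (b : Fin k → B) (v : Fin k → A),
      0 ≤ ∑ i, ∑ j, star (v i) * φ (star (b i) * b j) * v j

set_option maxHeartbeats 2000000

/-- If `ψ : A → F` is a completely positive contraction into a
finite-dimensional C*-algebra, `q ∈ F` a projection with `‖ψ(1) - q‖ < δ < 1/4`,
then `q ψ(1) q` is invertible in the corner `qFq`, and
`ψ'(a) := (q ψ(1) q)^{-1/2} (q ψ(a) q) (q ψ(1) q)^{-1/2}` (the inverse square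
root taken in the corner, realized by functional calculus) is a unital (into
`qFq`) completely positive map with `‖ψ'(a) - ψ(a)‖ ≤ C(δ) ‖a‖`, where
`C(δ) → 0` as `δ → 0`. -/
theorem corner_unitalization.{u, v} :
    ∃ C : ℝ → ℝ, Tendsto C (𝓝[>] (0 : ℝ)) (𝓝 0) ∧
      ∀ (A : Type u) (F : Type v) [CStarAlgebra A]
        [CStarAlgebra F] [FiniteDimensional ℂ F] [PartialOrder F] [StarOrderedRing F]
        (ψ : A → F), IsCompletelyPositive ψ → (∀ x, ‖ψ x‖ ≤ ‖x‖) →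
        ∀ q : F, IsIdempotentElem q → IsSelfAdjoint q →
        ∀ δ : ℝ, 0 < δ → δ < 1 / 4 → ‖ψ 1 - q‖ < δ →
          (∃ y : F, q * y * q = y ∧ y * (q * ψ 1 * q) = q ∧ (q * ψ 1 * q) * y = q) ∧
          (let r : F := cfc (fun t : ℝ => if t = 0 then 0 else t ^ (-(1:ℝ)/2)) (q * ψ 1 * q);
           let ψ' : A → F := fun a => r * (q * ψ a * q) * r;
           ψ' 1 = q ∧ (∀ a, q * ψ' a * q = ψ' a) ∧ IsCompletelyPositive ψ' ∧
             ∀ a : A, ‖ψ' a - ψ a‖ ≤ C δ * ‖a‖) := by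
  refine ⟨fun δ => 2 * Real.sqrt δ + 6 * δ, ?_, ?_⟩
  · have hcont : Continuous (fun δ : ℝ => 2 * Real.sqrt δ + 6 * δ) := by
      fun_prop
    have h := hcont.tendsto 0
    simp only [Real.sqrt_zero, mul_zero, add_zero] at h
    exact h.mono_left nhdsWithin_le_nhds
  intro A F instA instF instFD instPO instSOR ψ hCP hcon q hq hqsa δ hδ0 hδ4 hδψ
  rcases subsingleton_or_nontrivial F with hF | hF
  · refine ⟨⟨0, Subsingleton.elim _ _, Subsingleton.elim _ _, Subsingleton.elim _ _⟩, ?_⟩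
    intro r ψ'
    refine ⟨Subsingleton.elim _ _, fun a => Subsingleton.elim _ _,
      ⟨fun x y => Subsingleton.elim _ _, fun c x => Subsingleton.elim _ _,
        fun k b v => le_of_eq (Subsingleton.elim _ _)⟩, fun a => ?_⟩
    rw [Subsingleton.elim (ψ' a - ψ a) 0, norm_zero]
    have : 0 ≤ Real.sqrt δ := Real.sqrt_nonneg δ
    positivity
  obtain ⟨hadd, hsmul, hpos⟩ := hCP
  -- basic linearity facts
  have hψ0 : ψ 0 = 0 := by
    have h := (hadd 0 0).symm
    rw [add_zero] at h
    exact (add_eq_left).mp h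
  have hneg : ∀ x, ψ (-x) = -ψ x := by
    intro x
    have := hsmul (-1) x
    simpa using this
  have hsub : ∀ x y, ψ (x - y) = ψ x - ψ y := by
    intro x y
    rw [sub_eq_add_neg, hadd, hneg, sub_eq_add_neg]
  have hpos1 : ∀ c : A, 0 ≤ ψ (star c * c) := by
    intro c
    have h := hpos 1 (fun _ => c) (fun _ => 1)
    simpa using h
  have hψ1nn : 0 ≤ ψ 1 := by simpa using hpos1 1
  have hψ1sa : IsSelfAdjoint (ψ 1) := IsSelfAdjoint.of_nonneg hψ1nn
  have hsum2 : ∀ (a : A) (v₂ : F),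
      0 ≤ ψ 1 + ψ a * v₂ + star v₂ * ψ (star a) + star v₂ * ψ (star a * a) * v₂ := by
    intro a v₂
    have h := hpos 2 ![1, a] ![1, v₂]
    simpa [Fin.sum_univ_two, add_assoc] using h
  have hstar : ∀ a : A, star (ψ a) = ψ (star a) := by
    intro a
    set X := ψ a with hX
    set Y := ψ (star a) with hY
    have h1 := hsum2 a 1
    have h2 := hsum2 a (Complex.I • 1)
    simp only [mul_one, one_mul, star_one] at h1
    have sa1 : IsSelfAdjoint (X + Y) := by
      have h := IsSelfAdjoint.of_nonneg h1
      have h' := ((h.sub hψ1sa).sub (IsSelfAdjoint.of_nonneg (hpos1 a)))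
      have : ψ 1 + X + Y + ψ (star a * a) - ψ 1 - ψ (star a * a) = X + Y := by abel
      rwa [this] at h'
    have h2' : 0 ≤ ψ 1 + (Complex.I • X - Complex.I • Y) + ψ (star a * a) := by
      have e : ψ 1 + X * (Complex.I • 1) + star (Complex.I • 1) * Y
          + star (Complex.I • 1) * ψ (star a * a) * (Complex.I • 1)
          = ψ 1 + (Complex.I • X - Complex.I • Y) + ψ (star a * a) := by
        simp [star_smul, Complex.conj_I, mul_smul_comm, smul_mul_assoc, smul_smul,
          Complex.I_mul_I, sub_eq_add_neg, add_assoc]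
      rwa [e] at h2
    have sa2 : IsSelfAdjoint (Complex.I • X - Complex.I • Y) := by
      have h := IsSelfAdjoint.of_nonneg h2'
      have h' := ((h.sub hψ1sa).sub (IsSelfAdjoint.of_nonneg (hpos1 a)))
      have : ψ 1 + (Complex.I • X - Complex.I • Y) + ψ (star a * a) - ψ 1
          - ψ (star a * a) = Complex.I • X - Complex.I • Y := by abel
      rwa [this] at h'
    have e1 : star X + star Y = X + Y := by
      have h := sa1.star_eq
      rwa [star_add] at h
    have e2 : star X - star Y = Y - X := by
      have h := sa2.star_eq
      rw [star_sub, star_smul, star_smul, Complex.star_def, Complex.conj_I] at h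
      have h' := congrArg (fun z => Complex.I • z) h
      simp only [smul_sub, smul_smul, Complex.I_mul_I, neg_neg, mul_neg,
        Complex.I_mul_I, neg_smul, one_smul, neg_sub_neg] at h'
      exact h'
    have e4 : (2:ℂ) • star X = (2:ℂ) • Y := by
      rw [two_smul, two_smul]
      have := congrArg₂ (· + ·) e1 e2
      calc star X + star X = star X + star Y + (star X - star Y) := by abel
        _ = X + Y + (Y - X) := this
        _ = Y + Y := by abel
    have := congrArg (fun z => ((2:ℂ)⁻¹) • z) e4
    simpa [smul_smul] using this
  have h1norm : ‖(1:A)‖ ≤ 1 := by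
    have h := CStarRing.norm_star_mul_self (x := (1:A))
    simp only [star_one, one_mul] at h
    nlinarith [norm_nonneg (1:A)]
  have halgnn : ∀ t : ℝ, 0 ≤ t → 0 ≤ algebraMap ℝ F t := by
    intro t ht
    have h : algebraMap ℝ F t = star (Real.sqrt t • (1:F)) * (Real.sqrt t • 1) := by
      rw [star_smul, star_one, smul_mul_smul_comm, one_mul, star_trivial,
        Real.mul_self_sqrt ht, Algebra.algebraMap_eq_smul_one]
    rw [h]
    exact star_mul_self_nonneg _
  have hψ1le1 : ψ 1 ≤ 1 := by
    calc ψ 1 ≤ algebraMap ℝ F ‖ψ 1‖ := hψ1sa.le_algebraMap_norm_self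
      _ ≤ 1 := by
        have h1 : ‖ψ 1‖ ≤ 1 := le_trans (hcon 1) h1norm
        rw [← sub_nonneg, show (1:F) - algebraMap ℝ F ‖ψ 1‖ = algebraMap ℝ F (1 - ‖ψ 1‖) by
          rw [map_sub, map_one]]
        exact halgnn _ (by linarith)
  have hmono : ∀ a : A, ψ (star a * a) ≤ (‖a‖^2 : ℝ) • ψ 1 := by
    rcases subsingleton_or_nontrivial A with hA | hA
    · intro a
      rw [Subsingleton.elim a 0]
      simp [hψ0]
    · intro a
      set x := star a * a with hx
      have hxsa : IsSelfAdjoint x := IsSelfAdjoint.star_mul_self a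
      have hspx : ∀ t ∈ spectrum ℝ x, t ≤ ‖a‖^2 := by
        intro t ht
        have h := spectrum.norm_le_norm_of_mem ht
        have hxn : ‖x‖ = ‖a‖^2 := by rw [hx, CStarRing.norm_star_mul_self]; ring
        calc t ≤ ‖t‖ := le_abs_self t
          _ ≤ ‖x‖ := h
          _ = ‖a‖^2 := hxn
      set c := cfc (fun t : ℝ => Real.sqrt (‖a‖^2 - t)) x with hc
      have hcsa : IsSelfAdjoint c := cfc_predicate _ x
      have hcc : star c * c = algebraMap ℝ A (‖a‖^2) - x := by
        rw [hcsa.star_eq, hc, ← cfc_mul _ _ x (by fun_prop) (by fun_prop)]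
        calc cfc (fun t => Real.sqrt (‖a‖^2 - t) * Real.sqrt (‖a‖^2 - t)) x
            = cfc (fun t : ℝ => ‖a‖^2 - t) x := by
              apply cfc_congr
              intro t ht
              exact Real.mul_self_sqrt (by linarith [hspx t ht])
          _ = algebraMap ℝ A (‖a‖^2) - x := by
              rw [cfc_sub _ _ x (by fun_prop) (by fun_prop), cfc_const _ x, cfc_id' ℝ x]
      have h0 := hpos1 c
      rw [hcc, hsub] at h0
      have hψalg : ψ (algebraMap ℝ A (‖a‖^2)) = (‖a‖^2 : ℝ) • ψ 1 := by
        rw [Algebra.algebraMap_eq_smul_one, ← algebraMap_smul ℂ (‖a‖^2) (1:A), hsmul,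
          algebraMap_smul]
      rw [hψalg] at h0
      exact sub_nonneg.mp h0
  -- the corner element
  set b := q * ψ 1 * q with hbdef
  have hbsa : IsSelfAdjoint b := by
    rw [hbdef]
    unfold IsSelfAdjoint
    simp [star_mul, hqsa.star_eq, hψ1sa.star_eq, mul_assoc]
  have hbnn : 0 ≤ b := by
    rw [hbdef, show q * ψ 1 * q = star q * ψ 1 * q by rw [hqsa.star_eq]]
    exact star_left_conjugate_nonneg hψ1nn q
  have hqb : q * b = b := by rw [hbdef, ← mul_assoc, ← mul_assoc, hq.eq]
  have hbq : b * q = b := by rw [hbdef, mul_assoc, hq.eq]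
  have hqnorm : ‖q‖ ≤ 1 := proj_norm_le_one hq hqsa
  have hbqnorm : ‖b - q‖ < δ := by
    have he : b - q = q * (ψ 1 - q) * q := by
      have h : q * (ψ 1 - q) * q = q * ψ 1 * q - q * q * q := by noncomm_ring
      rw [h, hq.eq, hq.eq, hbdef]
    have h1 : ‖q * (ψ 1 - q) * q‖ ≤ ‖q * (ψ 1 - q)‖ * ‖q‖ := norm_mul_le _ _
    have h2 : ‖q * (ψ 1 - q)‖ ≤ ‖q‖ * ‖ψ 1 - q‖ := norm_mul_le _ _
    rw [he]
    nlinarith [norm_nonneg (ψ 1 - q), norm_nonneg q, norm_nonneg (q * (ψ 1 - q))]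
  set s := b + (1 - q) with hsdef
  have hs1 : ‖s - 1‖ < δ := by
    have h : s - 1 = b - q := by rw [hsdef]; abel
    rwa [h]
  have hssa : IsSelfAdjoint s := by
    rw [hsdef]
    exact hbsa.add ((IsSelfAdjoint.one F).sub hqsa)
  have hqs : q * s = b := by
    rw [hsdef, mul_add, mul_sub, mul_one, hq.eq, hqb]; abel
  have hsq : s * q = b := by
    rw [hsdef, add_mul, sub_mul, one_mul, hq.eq, hbq]; abel
  have hspecs : spectrum ℝ s ⊆ Set.Icc (1-δ) (1+δ) := by
    intro t ht
    have hmem : t - 1 ∈ spectrum ℝ (s - algebraMap ℝ F 1) := by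
      rw [← spectrum.sub_singleton_eq]
      exact Set.sub_mem_sub ht rfl
    have hle : ‖t - 1‖ ≤ ‖s - algebraMap ℝ F 1‖ := spectrum.norm_le_norm_of_mem hmem
    rw [map_one, Real.norm_eq_abs] at hle
    have h := abs_le.mp (le_trans hle hs1.le)
    exact ⟨by linarith [h.1], by linarith [h.2]⟩
  have hspecb : spectrum ℝ b ⊆ {0} ∪ Set.Icc (1-δ) (1+δ) := by
    intro t ht
    by_contra hmem
    simp only [Set.mem_union, Set.mem_singleton_iff, not_or] at hmem
    obtain ⟨ht0, htI⟩ := hmem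
    have hts : t ∉ spectrum ℝ s := fun h => htI (hspecs h)
    rw [spectrum.notMem_iff] at hts
    rw [spectrum.mem_iff] at ht
    apply ht
    obtain ⟨U, hU⟩ := hts
    have hqU : q * (U : F) = (U : F) * q := by
      rw [hU, mul_sub, sub_mul, hqs, hsq, Algebra.commutes]
    have hqUinv : q * ((U⁻¹ : Fˣ) : F) = ((U⁻¹ : Fˣ) : F) * q :=
      (Commute.units_inv_right hqU)
    have hdecomp : algebraMap ℝ F t - b = (U : F) * q + algebraMap ℝ F t * (1 - q) := by
      rw [hU, sub_mul, mul_sub, mul_one, hsq]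
      abel
    refine ⟨⟨algebraMap ℝ F t - b,
      ((U⁻¹ : Fˣ) : F) * q + algebraMap ℝ F t⁻¹ * (1 - q), ?_, ?_⟩, rfl⟩
    · rw [hdecomp]
      exact aux_unit hq.eq U.mul_inv
        (by rw [← map_mul, mul_inv_cancel₀ ht0, map_one]) hqUinv
        (fun x => Algebra.commutes _ _)
    · rw [hdecomp]
      exact aux_unit hq.eq U.inv_mul
        (by rw [← map_mul, inv_mul_cancel₀ ht0, map_one]) hqU
        (fun x => Algebra.commutes _ _)
  -- continuity of the cfc functions
  set fI : ℝ → ℝ := fun t => if t = 0 then 0 else t⁻¹ with hfIdef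
  set fR : ℝ → ℝ := fun t => if t = 0 then 0 else t ^ (-(1:ℝ)/2) with hfRdef
  set fG : ℝ → ℝ := fun t => if t = 0 then 0 else 1 with hfGdef
  have hδ34 : (3:ℝ)/4 ≤ 1 - δ := by linarith
  have hI : ContinuousOn fI (spectrum ℝ b) :=
    (contOn_aux (fun t ht => continuousAt_inv₀ (by linarith)) hδ34).mono hspecb
  have hR : ContinuousOn fR (spectrum ℝ b) :=
    (contOn_aux (fun t ht => Real.continuousAt_rpow_const t _ (Or.inl (by linarith)))
      hδ34).mono hspecb
  have hG : ContinuousOn fG (spectrum ℝ b) :=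
    (contOn_aux (fun t ht => continuousAt_const) hδ34).mono hspecb
  have hsp : ∀ t ∈ spectrum ℝ b, t = 0 ∨ ((3:ℝ)/4 ≤ t ∧ 1 - δ ≤ t ∧ t ≤ 1+δ) := by
    intro t ht
    rcases hspecb ht with h | h
    · exact Or.inl h
    · exact Or.inr ⟨le_trans hδ34 h.1, h.1, h.2⟩
  -- the support projection e equals q
  set e := cfc fG b with hedef
  have hesa : IsSelfAdjoint e := cfc_predicate _ b
  have hee : e * e = e := by
    rw [hedef, ← cfc_mul _ _ b hG hG]
    apply cfc_congr
    intro t ht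
    by_cases h : t = 0 <;> simp [hfGdef, h]
  have heb : e * b = b := by
    calc e * b = cfc fG b * cfc (fun t : ℝ => t) b := by rw [hedef, cfc_id' ℝ b]
      _ = cfc (fun t : ℝ => fG t * t) b := (cfc_mul _ _ b hG (by fun_prop)).symm
      _ = cfc (fun t : ℝ => t) b := by
          apply cfc_congr
          intro t ht
          by_cases h : t = 0 <;> simp [hfGdef, h]
      _ = b := cfc_id' ℝ b
  have hbe : b * e = b := by
    have h := congrArg star heb
    rwa [star_mul, hesa.star_eq, hbsa.star_eq] at h
  have henn : 0 ≤ e := by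
    rw [hedef]
    apply cfc_nonneg
    intro t ht
    by_cases h : t = 0 <;> simp [hfGdef, h]
  have hble : (1-δ) • e ≤ b := by
    rw [← sub_nonneg]
    have h : b - (1-δ) • e = cfc (fun t : ℝ => t - (1-δ) • fG t) b := by
      rw [cfc_sub (fun t : ℝ => t) (fun t : ℝ => (1-δ) • fG t) b (by fun_prop)
        (fun t ht => (hG t ht).const_smul (1-δ)), cfc_smul (1-δ) fG b hG, cfc_id' ℝ b]
    rw [h]
    apply cfc_nonneg
    intro t ht
    rcases hsp t ht with h0 | ⟨h1, h2, h3⟩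
    · simp [hfGdef, h0]
    · have hne : t ≠ 0 := by linarith
      simp only [hfGdef, if_neg hne, smul_eq_mul, mul_one]
      linarith
  have hq1b : (1 - q) * b = 0 := by rw [sub_mul, one_mul, hqb, sub_self]
  have h1qsa : IsSelfAdjoint ((1:F) - q) := (IsSelfAdjoint.one F).sub hqsa
  have hδ1 : (0:ℝ) < 1 - δ := by linarith
  have hcon0 : (1 - q) * e * (1 - q) = 0 := by
    have hle : (1-δ) • ((1-q) * e * (1-q)) ≤ 0 := by
      have h := star_left_conjugate_le_conjugate hble (1 - q)
      rw [h1qsa.star_eq] at h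
      have h2 : (1-q) * b * (1-q) = 0 := by rw [hq1b, zero_mul]
      rw [h2] at h
      calc (1-δ) • ((1-q) * e * (1-q)) = (1-q) * ((1-δ)•e) * (1-q) := by
            rw [mul_smul_comm, smul_mul_assoc]
        _ ≤ 0 := h
    have hge : 0 ≤ (1-q) * e * (1-q) := by
      have := star_left_conjugate_nonneg henn (1 - q)
      rwa [h1qsa.star_eq] at this
    have h3 := real_smul_nonneg (le_of_lt (inv_pos.mpr hδ1)) (neg_nonneg.mpr hle)
    rw [smul_neg, smul_smul, inv_mul_cancel₀ (ne_of_gt hδ1), one_smul] at h3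
    exact le_antisymm (neg_nonneg.mp h3) hge
  have he1q : e * (1 - q) = 0 := by
    have hstareq : star (e * (1-q)) * (e * (1-q)) = (1-q) * e * (1-q) := by
      rw [star_mul, hesa.star_eq, h1qsa.star_eq,
        show ((1-q) * e) * (e * (1-q)) = (1-q) * (e*e) * (1-q) by noncomm_ring, hee]
    have hn : ‖e * (1-q)‖ * ‖e * (1-q)‖ = 0 := by
      rw [← CStarRing.norm_star_mul_self, hstareq, hcon0, norm_zero]
    exact norm_eq_zero.mp (mul_self_eq_zero.mp hn)
  have heq2 : e * q = e := by
    have h := he1q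
    rw [mul_sub, mul_one] at h
    exact (sub_eq_zero.mp h).symm
  have hqe : q * e = e := by
    have h := congrArg star heq2
    rwa [star_mul, hesa.star_eq, hqsa.star_eq] at h
  have hqeq : e = q := by
    set p := q - e with hpdef
    have hpsa : IsSelfAdjoint p := hqsa.sub hesa
    have hpp : p * p = p := by
      rw [hpdef, show (q - e) * (q - e) = q*q - q*e - e*q + e*e by noncomm_ring,
        hq.eq, hqe, heq2, hee]
      abel
    have hpnn : 0 ≤ p := by
      have h := star_mul_self_nonneg p
      rwa [hpsa.star_eq, hpp] at h
    have hpb : p * b = 0 := by rw [hpdef, sub_mul, hqb, heb, sub_self]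
    have hpq : p * q = p := by rw [hpdef, sub_mul, hq.eq, heq2]
    have hkey : p * (b - q) * p = -p := by
      rw [show p * (b - q) * p = p * b * p - p * q * p by noncomm_ring, hpb, zero_mul,
        hpq, hpp, zero_sub]
    have hlow : -(algebraMap ℝ F ‖b - q‖) ≤ b - q :=
      (hbsa.sub hqsa).neg_algebraMap_norm_le_self
    have hconj := star_left_conjugate_le_conjugate hlow p
    rw [hpsa.star_eq, hkey] at hconj
    have hcomm : p * algebraMap ℝ F ‖b - q‖ = algebraMap ℝ F ‖b - q‖ * p :=
      (Algebra.commutes _ _).symm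
    have hlhs : p * (-(algebraMap ℝ F ‖b - q‖)) * p = -(‖b - q‖ • p) := by
      rw [show p * (-(algebraMap ℝ F ‖b - q‖)) * p = -(p * algebraMap ℝ F ‖b - q‖ * p)
          by noncomm_ring, hcomm, mul_assoc, hpp, ← Algebra.smul_def]
    rw [hlhs] at hconj
    have hple : p ≤ ‖b - q‖ • p := by
      have := neg_le_neg_iff.mp hconj
      exact this
    have hc1 : (0:ℝ) < 1 - ‖b - q‖ := by linarith [hbqnorm, hδ4]
    have hd : 0 ≤ ‖b-q‖ • p - p := sub_nonneg.mpr hple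
    have he2 : ‖b-q‖ • p - p = -((1 - ‖b-q‖) • p) := by
      rw [sub_smul, one_smul, neg_sub]
    rw [he2] at hd
    have h3 := real_smul_nonneg (le_of_lt (inv_pos.mpr hc1)) hd
    rw [smul_neg, smul_smul, inv_mul_cancel₀ (ne_of_gt hc1), one_smul] at h3
    have hp0 : p = 0 := le_antisymm (neg_nonneg.mp h3) hpnn
    rw [hpdef] at hp0
    exact (sub_eq_zero.mp hp0).symm
  -- the corner inverse y
  set y := cfc fI b with hydef
  have hysa : IsSelfAdjoint y := cfc_predicate _ b
  have hqy : q * y = y := by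
    rw [← hqeq, hedef, hydef, ← cfc_mul _ _ b hG hI]
    apply cfc_congr
    intro t ht
    by_cases h : t = 0 <;> simp [hfGdef, hfIdef, h]
  have hyq : y * q = y := by
    rw [← hqeq, hedef, hydef, ← cfc_mul _ _ b hI hG]
    apply cfc_congr
    intro t ht
    by_cases h : t = 0 <;> simp [hfGdef, hfIdef, h]
  have hyb : y * b = q := by
    rw [← hqeq, hedef, hydef]
    calc cfc fI b * b = cfc fI b * cfc (fun t : ℝ => t) b := by rw [cfc_id' ℝ b]
      _ = cfc (fun t : ℝ => fI t * t) b := (cfc_mul _ _ b hI (by fun_prop)).symm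
      _ = cfc fG b := by
          apply cfc_congr
          intro t ht
          rcases eq_or_ne t 0 with h | h
          · simp [hfIdef, hfGdef, h]
          · simp [hfIdef, hfGdef, h, inv_mul_cancel₀ h]
  have hby : b * y = q := by
    have h := congrArg star hyb
    rwa [star_mul, hysa.star_eq, hbsa.star_eq, hqsa.star_eq] at h
  refine ⟨⟨y, by rw [hqy, hyq], hyb, hby⟩, ?_⟩
  intro r ψ'
  have hrdef : r = cfc fR b := rfl
  have hψ'def : ∀ a, ψ' a = r * (q * ψ a * q) * r := fun a => rfl
  have hrsa : IsSelfAdjoint r := hrdef ▸ cfc_predicate _ b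
  have hqr : q * r = r := by
    rw [hrdef, ← hqeq, hedef, ← cfc_mul _ _ b hG hR]
    apply cfc_congr
    intro t ht
    by_cases h : t = 0 <;> simp [hfGdef, hfRdef, h]
  have hrq : r * q = r := by
    rw [hrdef, ← hqeq, hedef, ← cfc_mul _ _ b hR hG]
    apply cfc_congr
    intro t ht
    by_cases h : t = 0 <;> simp [hfGdef, hfRdef, h]
  have hrbr : r * b * r = q := by
    rw [hrdef, ← hqeq, hedef]
    calc cfc fR b * b * cfc fR b
        = cfc fR b * cfc (fun t : ℝ => t) b * cfc fR b := by rw [cfc_id' ℝ b]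
      _ = cfc (fun t : ℝ => fR t * t) b * cfc fR b := by
          rw [← cfc_mul _ _ b hR (by fun_prop)]
      _ = cfc (fun t : ℝ => fR t * t * fR t) b := by
          rw [← cfc_mul (fun t : ℝ => fR t * t) fR b (hR.mul (by fun_prop)) hR]
      _ = cfc fG b := by
          apply cfc_congr
          intro t ht
          rcases hsp t ht with h0 | ⟨h1, h2, h3⟩
          · simp [hfRdef, hfGdef, h0]
          · have ht0 : (0:ℝ) < t := by linarith
            have hne : t ≠ 0 := ne_of_gt ht0
            simp only [hfRdef, hfGdef, if_neg hne]
            have hcomb : t ^ (-(1:ℝ)/2) * t ^ (1:ℝ) * t ^ (-(1:ℝ)/2) = 1 := by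
              rw [← Real.rpow_add ht0, ← Real.rpow_add ht0]
              norm_num
            rwa [Real.rpow_one] at hcomb
  have hψ'1 : ψ' 1 = q := by
    rw [hψ'def, ← hbdef]
    exact hrbr
  have hcorner : ∀ a, q * ψ' a * q = ψ' a := by
    intro a
    rw [hψ'def]
    calc q * (r * (q * ψ a * q) * r) * q = (q * r) * (q * ψ a * q) * (r * q) := by
          noncomm_ring
      _ = r * (q * ψ a * q) * r := by rw [hqr, hrq]
  refine ⟨hψ'1, hcorner, ⟨?_, ?_, ?_⟩, ?_⟩
  · intro x z
    rw [hψ'def, hψ'def, hψ'def, hadd]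
    noncomm_ring
  · intro c x
    rw [hψ'def, hψ'def, hsmul]
    simp [mul_smul_comm, smul_mul_assoc]
  · intro k bb v
    have h := hpos k bb (fun i => q * (r * v i))
    have hterm : ∀ i j, star (v i) * ψ' (star (bb i) * bb j) * v j
        = star (q * (r * v i)) * ψ (star (bb i) * bb j) * (q * (r * v j)) := by
      intro i j
      rw [hψ'def]
      simp only [star_mul, hrsa.star_eq, hqsa.star_eq]
      noncomm_ring
    calc (0:F) ≤ ∑ i, ∑ j, star (q * (r * v i)) * ψ (star (bb i) * bb j) * (q * (r * v j)) :=
        h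
      _ = ∑ i, ∑ j, star (v i) * ψ' (star (bb i) * bb j) * v j := by
          refine Finset.sum_congr rfl fun i _ => Finset.sum_congr rfl fun j _ => ?_
          exact (hterm i j).symm
  -- the norm estimate
  have hsum2' : ∀ (a : A) (w z : F), 0 ≤ star w * ψ 1 * w + star w * ψ a * z
      + star z * ψ (star a) * w + star z * ψ (star a * a) * z := by
    intro a w z
    have h := hpos 2 ![1, a] ![w, z]
    simpa [Fin.sum_univ_two, add_assoc] using h
  have hq1q : (1 - q) * q = 0 := by rw [sub_mul, one_mul, hq.eq, sub_self]
  have hpnormle : ‖(1:F) - q‖ ≤ 1 := proj_norm_le_one hq.one_sub h1qsa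
  have hpψ1norm : ‖(1 - q) * ψ 1 * (1 - q)‖ ≤ δ := by
    have hp1 : (1 - q) * ψ 1 * (1 - q) = (1 - q) * (ψ 1 - q) * (1 - q) := by
      rw [show (1 - q) * (ψ 1 - q) * (1 - q)
          = (1-q) * ψ 1 * (1-q) - ((1-q) * q) * (1-q) by noncomm_ring, hq1q, zero_mul,
        sub_zero]
    rw [hp1]
    have h1 : ‖(1-q) * (ψ 1 - q) * (1-q)‖ ≤ ‖(1-q) * (ψ 1 - q)‖ * ‖(1:F)-q‖ :=
      norm_mul_le _ _
    have h2 : ‖(1-q) * (ψ 1 - q)‖ ≤ ‖(1:F)-q‖ * ‖ψ 1 - q‖ := norm_mul_le _ _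
    nlinarith [norm_nonneg (ψ 1 - q), norm_nonneg ((1:F) - q),
      norm_nonneg ((1-q) * (ψ 1 - q))]
  have hmainA : ∀ a : A, ‖ψ a * (1 - q)‖ ≤ Real.sqrt δ * ‖a‖ := by
    intro a
    set u := ψ a * (1 - q) with hudef
    have hstaru : star u = (1 - q) * star (ψ a) := by
      rw [hudef, star_mul, h1qsa.star_eq]
    have hXT : star u * u ≤ (1 - q) * ψ (star a * a) * (1 - q) := by
      have h := hsum2' a (-u) (1 - q)
      rw [h1qsa.star_eq] at h
      rw [show star (-u) * ψ 1 * (-u) = star u * ψ 1 * u by rw [star_neg]; noncomm_ring,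
        show star (-u) * ψ a * (1 - q) = -(star u * u) by
          rw [star_neg, neg_mul, neg_mul, mul_assoc, ← hudef],
        show (1 - q) * ψ (star a) * (-u) = -(star u * u) by
          rw [← hstar, mul_neg, ← hstaru]] at h
      have hT1 : star u * ψ 1 * u ≤ star u * u := by
        have h' := star_left_conjugate_le_conjugate hψ1le1 u
        rwa [mul_one] at h'
      have hre : star u * ψ 1 * u + -(star u * u) + -(star u * u)
          + (1-q) * ψ (star a * a) * (1-q)
          = (star u * ψ 1 * u + (1-q) * ψ (star a * a) * (1-q))
            - (star u * u + star u * u) := by abel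
      rw [hre] at h
      have h2 := sub_nonneg.mp h
      have h3 : star u * u + star u * u
          ≤ star u * u + (1-q) * ψ (star a * a) * (1-q) :=
        le_trans h2 (add_le_add hT1 le_rfl)
      exact le_of_add_le_add_left h3
    have hM : (1 - q) * ψ (star a * a) * (1 - q)
        ≤ (‖a‖^2 : ℝ) • ((1 - q) * ψ 1 * (1 - q)) := by
      have h := star_left_conjugate_le_conjugate (hmono a) (1 - q)
      rw [h1qsa.star_eq] at h
      calc (1 - q) * ψ (star a * a) * (1 - q) ≤ (1-q) * ((‖a‖^2:ℝ) • ψ 1) * (1-q) := h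
        _ = (‖a‖^2 : ℝ) • ((1 - q) * ψ 1 * (1 - q)) := by
            rw [mul_smul_comm, smul_mul_assoc]
    have hnorm2 : ‖u‖ * ‖u‖ ≤ δ * ‖a‖^2 := by
      have h1 : ‖star u * u‖ ≤ ‖(‖a‖^2 : ℝ) • ((1 - q) * ψ 1 * (1 - q))‖ :=
        CStarAlgebra.norm_le_norm_of_nonneg_of_le (star_mul_self_nonneg u)
          (le_trans hXT hM)
      rw [CStarRing.norm_star_mul_self] at h1
      rw [norm_smul] at h1
      have h2 : ‖(‖a‖^2 : ℝ)‖ = ‖a‖^2 := by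
        rw [Real.norm_eq_abs, abs_of_nonneg (by positivity)]
      rw [h2] at h1
      nlinarith [hpψ1norm, norm_nonneg a, norm_nonneg ((1 - q) * ψ 1 * (1 - q))]
    calc ‖u‖ = Real.sqrt (‖u‖ * ‖u‖) := (Real.sqrt_mul_self (norm_nonneg u)).symm
      _ ≤ Real.sqrt (δ * ‖a‖^2) := Real.sqrt_le_sqrt hnorm2
      _ = Real.sqrt δ * ‖a‖ := by
          rw [Real.sqrt_mul hδ0.le, Real.sqrt_sq (norm_nonneg a)]
  have hmainA' : ∀ a : A, ‖(1 - q) * ψ a‖ ≤ Real.sqrt δ * ‖a‖ := by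
    intro a
    have h : ‖(1 - q) * ψ a‖ = ‖ψ (star a) * (1 - q)‖ := by
      rw [← norm_star, star_mul, h1qsa.star_eq, hstar]
    rw [h]
    calc ‖ψ (star a) * (1 - q)‖ ≤ Real.sqrt δ * ‖star a‖ := hmainA (star a)
      _ = Real.sqrt δ * ‖a‖ := by rw [norm_star]
  have hpartA : ∀ a : A, ‖q * ψ a * q - ψ a‖ ≤ 2 * Real.sqrt δ * ‖a‖ := by
    intro a
    have hdec : q * ψ a * q - ψ a = -(q * (ψ a * (1-q))) - (1-q) * ψ a := by
      noncomm_ring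
    rw [hdec]
    calc ‖-(q * (ψ a * (1-q))) - (1-q) * ψ a‖
        ≤ ‖-(q * (ψ a * (1-q)))‖ + ‖(1-q) * ψ a‖ := norm_sub_le _ _
      _ = ‖q * (ψ a * (1-q))‖ + ‖(1-q) * ψ a‖ := by rw [norm_neg]
      _ ≤ ‖q‖ * ‖ψ a * (1-q)‖ + ‖(1-q) * ψ a‖ := by
          have := norm_mul_le q (ψ a * (1-q))
          linarith
      _ ≤ 2 * Real.sqrt δ * ‖a‖ := by
          have h1 := hmainA a
          have h2 := hmainA' a
          have h3 : (0:ℝ) ≤ Real.sqrt δ := Real.sqrt_nonneg δ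
          nlinarith [norm_nonneg (ψ a * (1-q)), norm_nonneg a, norm_nonneg q]
  -- bounds on r
  have hrnorm : ‖r‖ ≤ 2 := by
    rw [hrdef]
    apply norm_cfc_le (by norm_num)
    intro t ht
    rcases hsp t ht with h0 | ⟨h1, h2, h3⟩
    · simp [hfRdef, h0]
    · have ht0 : (0:ℝ) < t := by linarith
      have hrpow : t ^ (-(1:ℝ)/2) = (Real.sqrt t)⁻¹ := by
        rw [show (-(1:ℝ)/2) = -(1/2 : ℝ) by norm_num, Real.rpow_neg ht0.le,
          ← Real.sqrt_eq_rpow]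
      simp only [hfRdef, if_neg (ne_of_gt ht0), hrpow]
      rw [Real.norm_eq_abs, abs_of_nonneg (inv_nonneg.mpr (Real.sqrt_nonneg t))]
      have hsq : (1:ℝ)/2 ≤ Real.sqrt t := by
        nlinarith [Real.sq_sqrt ht0.le, Real.sqrt_nonneg t,
          sq_nonneg (Real.sqrt t - 1/2), sq_nonneg (Real.sqrt t + 1/2)]
      have hinv := one_div_le_one_div_of_le (by norm_num : (0:ℝ) < 1/2) hsq
      rw [one_div] at hinv
      norm_num at hinv ⊢
      convert hinv using 1 <;> norm_num
  have hrqnorm : ‖r - q‖ ≤ 2 * δ := by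
    rw [hrdef, ← hqeq, hedef, ← cfc_sub fR fG b hR hG]
    apply norm_cfc_le (by linarith)
    intro t ht
    rcases hsp t ht with h0 | ⟨h1, h2, h3⟩
    · simp only [hfRdef, hfGdef, if_pos h0, sub_zero, norm_zero]
      linarith
    · have ht0 : (0:ℝ) < t := by linarith
      have hrpow : t ^ (-(1:ℝ)/2) = (Real.sqrt t)⁻¹ := by
        rw [show (-(1:ℝ)/2) = -(1/2 : ℝ) by norm_num, Real.rpow_neg ht0.le,
          ← Real.sqrt_eq_rpow]
      simp only [hfRdef, hfGdef, if_neg (ne_of_gt ht0), hrpow]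
      set w := Real.sqrt t with hwdef
      have hw0 : (0:ℝ) < w := Real.sqrt_pos.mpr ht0
      have hwsq : w^2 = t := Real.sq_sqrt ht0.le
      have hw12 : (1:ℝ)/2 ≤ w := by
        nlinarith [sq_nonneg (w - 1/2), sq_nonneg (w + 1/2)]
      have habs1 : |1 - w| ≤ δ := by
        have ht1 : |1 - t| ≤ δ := abs_le.mpr ⟨by linarith, by linarith⟩
        have hmul : |1 - w| * (1 + w) = |1 - t| := by
          rw [show |1 - t| = |(1 - w) * (1 + w)| by rw [← hwsq]; ring_nf, abs_mul,
            abs_of_pos (by linarith : (0:ℝ) < 1 + w)]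
        nlinarith [abs_nonneg (1 - w)]
      have heqd : w⁻¹ - 1 = (1 - w) / w := by field_simp
      rw [Real.norm_eq_abs, heqd, abs_div, abs_of_pos hw0, div_le_iff₀ hw0]
      nlinarith
  -- assemble
  intro a
  show ‖ψ' a - ψ a‖ ≤ (2 * Real.sqrt δ + 6 * δ) * ‖a‖
  have hψan : ‖ψ a‖ ≤ ‖a‖ := hcon a
  set x := q * ψ a * q with hxdef
  have hxnorm : ‖x‖ ≤ ‖a‖ := by
    have h1 : ‖q * ψ a * q‖ ≤ ‖q * ψ a‖ * ‖q‖ := norm_mul_le _ _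
    have h2 : ‖q * ψ a‖ ≤ ‖q‖ * ‖ψ a‖ := norm_mul_le _ _
    rw [hxdef]
    nlinarith [norm_nonneg (ψ a), norm_nonneg q, norm_nonneg (q * ψ a), norm_nonneg a]
  have hqx : q * x = x := by rw [hxdef, ← mul_assoc, ← mul_assoc, hq.eq]
  have hxq : x * q = x := by rw [hxdef, mul_assoc, hq.eq]
  have hdecB : r * x * r - x = (r * x) * (r - q) + (r - q) * x := by
    rw [mul_sub, sub_mul, mul_assoc r x q, hxq, hqx]
    abel
  have hB : ‖r * x * r - x‖ ≤ 6 * δ * ‖a‖ := by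
    rw [hdecB]
    have h1 : ‖(r * x) * (r - q) + (r - q) * x‖
        ≤ ‖(r * x) * (r - q)‖ + ‖(r - q) * x‖ := norm_add_le _ _
    have h2 : ‖(r * x) * (r - q)‖ ≤ ‖r * x‖ * ‖r - q‖ := norm_mul_le _ _
    have h3 : ‖r * x‖ ≤ ‖r‖ * ‖x‖ := norm_mul_le _ _
    have h4 : ‖(r - q) * x‖ ≤ ‖r - q‖ * ‖x‖ := norm_mul_le _ _
    have k0 : ‖r * x‖ ≤ 2 * ‖a‖ := by
      refine le_trans h3 ?_
      nlinarith [norm_nonneg r, norm_nonneg x, norm_nonneg a]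
    have k1 : ‖r * x * (r - q)‖ ≤ (2 * ‖a‖) * (2 * δ) := by
      refine le_trans h2 (mul_le_mul k0 hrqnorm (norm_nonneg _) (by positivity))
    have k2 : ‖(r - q) * x‖ ≤ (2 * δ) * ‖a‖ := by
      refine le_trans h4 (mul_le_mul hrqnorm hxnorm (norm_nonneg _) (by positivity))
    nlinarith [h1, k1, k2]
  have hsplit : ψ' a - ψ a = (r * x * r - x) + (x - ψ a) := by
    rw [hψ'def, hxdef]
    abel
  calc ‖ψ' a - ψ a‖ = ‖(r * x * r - x) + (x - ψ a)‖ := by rw [hsplit]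
    _ ≤ ‖r * x * r - x‖ + ‖x - ψ a‖ := norm_add_le _ _
    _ ≤ 6 * δ * ‖a‖ + 2 * Real.sqrt δ * ‖a‖ := by
        have := hpartA a
        rw [← hxdef] at this
        linarith [hB]
    _ = (2 * Real.sqrt δ + 6 * δ) * ‖a‖ := by ring
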